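/- Let H be a Hilbert space, (eᵢ)_{i∈ℕ} an orthonormal sequence, (λᵢ) ∈ ℓ², r > 0 with ∑|λᵢ|² > r², and x ∈ H with ‖x − ∑λᵢeᵢ‖ ≤ r. Then 0 ≤ ‖x‖² − ∑|⟨x,eᵢ⟩|² ≤ (r² / (∑|λᵢ|² − r²))·∑|⟨x,eᵢ⟩|². -/

import Mathlib

open scoped InnerProductSpace ComplexConjugate

section Aux

variable {𝕜 E : Type*} [RCLike 𝕜] [NormedAddCommGroup E] [InnerProductSpace 𝕜 E]

/-- Norm squared of an orthonormal series. -/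
lemma aux_norm_sq_tsum {ι : Type*} {e : ι → E} (he : Orthonormal 𝕜 e) {c : ι → 𝕜} {y : E}
    (hy : HasSum (fun i => c i • e i) y) (_hc : Summable fun i => ‖c i‖ ^ 2) :
    ‖y‖ ^ 2 = ∑' i, ‖c i‖ ^ 2 := by
  have h1 : Filter.Tendsto (fun s : Finset ι => ‖∑ i ∈ s, c i • e i‖ ^ 2)
      Filter.atTop (nhds (‖y‖ ^ 2)) := by
    exact ((continuous_norm.pow 2).continuousAt).tendsto.comp hy
  have h2 : ∀ s : Finset ι, ‖∑ i ∈ s, c i • e i‖ ^ 2 = ∑ i ∈ s, ‖c i‖ ^ 2 := by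
    intro s
    simpa using he.orthogonalFamily.norm_sum c s
  simp only [h2] at h1
  exact (HasSum.tsum_eq (show HasSum (fun i => ‖c i‖ ^ 2) (‖y‖ ^ 2) from h1)).symm

lemma aux_inner_tsum_zero {ι : Type*} {e : ι → E} {c : ι → 𝕜} {z w : E}
    (hz : HasSum (fun i => c i • e i) z) (hw : ∀ i, ⟪w, e i⟫_𝕜 = 0) :
    ⟪w, z⟫_𝕜 = 0 := by
  have := (innerSL 𝕜 w).hasSum hz
  simp only [innerSL_apply_apply, inner_smul_right, hw, mul_zero] at this
  simpa using this.tsum_eq.symm.trans tsum_zero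

end Aux

theorem stmt_17 {𝕜 E : Type*} [RCLike 𝕜] [NormedAddCommGroup E] [InnerProductSpace 𝕜 E]
    [CompleteSpace E] (e : ℕ → E) (he : Orthonormal 𝕜 e) (l : ℕ → 𝕜)
    (hl : Summable fun i => ‖l i‖ ^ 2) (r : ℝ) (hr : 0 < r)
    (hlr : r ^ 2 < ∑' i, ‖l i‖ ^ 2) (s : E) (hs : HasSum (fun i => l i • e i) s)
    (x : E) (hx : ‖x - s‖ ≤ r) :
    0 ≤ ‖x‖ ^ 2 - ∑' i, ‖⟪x, e i⟫_𝕜‖ ^ 2 ∧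
      ‖x‖ ^ 2 - ∑' i, ‖⟪x, e i⟫_𝕜‖ ^ 2 ≤
        (r ^ 2 / ((∑' i, ‖l i‖ ^ 2) - r ^ 2)) * ∑' i, ‖⟪x, e i⟫_𝕜‖ ^ 2 := by
  set c : ℕ → 𝕜 := fun i => ⟪e i, x⟫_𝕜 with hc_def
  have hcx : ∀ i, ‖⟪x, e i⟫_𝕜‖ = ‖c i‖ := fun i => norm_inner_symm x (e i)
  have hSeq : (∑' i, ‖⟪x, e i⟫_𝕜‖ ^ 2) = ∑' i, ‖c i‖ ^ 2 := by
    exact tsum_congr fun i => by rw [hcx]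
  have hcs : Summable fun i => ‖c i‖ ^ 2 := he.inner_products_summable x
  -- the series ∑ c i • e i converges
  have hsum : Summable fun i => c i • e i := by
    have := (he.orthogonalFamily.summable_iff_norm_sq_summable c).2 hcs
    simpa using this
  set y : E := ∑' i, c i • e i with hy_def
  have hy : HasSum (fun i => c i • e i) y := hsum.hasSum
  -- w := x - y is orthogonal to each e i
  have hw : ∀ i, ⟪x - y, e i⟫_𝕜 = 0 := by
    intro i
    have h1 : ⟪e i, y⟫_𝕜 = c i := by
      have h := (innerSL 𝕜 (e i)).hasSum hy
      simp only [innerSL_apply_apply, inner_smul_right] at h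
      have h2 : ∀ j, c j * ⟪e i, e j⟫_𝕜 = if j = i then c i else 0 := by
        intro j
        by_cases hij : j = i
        · subst hij; simp [orthonormal_iff_ite.1 he, he.1 j]
        · simp [orthonormal_iff_ite.1 he, Ne.symm hij, hij]
      simp only [h2] at h
      exact h.tsum_eq.symm.trans (tsum_ite_eq i (fun _ => c i))
    have : ⟪e i, x - y⟫_𝕜 = 0 := by
      rw [inner_sub_right, h1, hc_def, sub_self]
    rw [← inner_conj_symm, this, map_zero]
  have hw' : ∀ i, ⟪e i, x - y⟫_𝕜 = 0 := by
    intro i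
    rw [← inner_conj_symm, hw i, map_zero]
  -- orthogonality relations
  have hwy : ⟪x - y, y⟫_𝕜 = 0 := aux_inner_tsum_zero hy hw
  have hws : ⟪x - y, s⟫_𝕜 = 0 := aux_inner_tsum_zero hs hw
  have hwys : ⟪x - y, y - s⟫_𝕜 = 0 := by rw [inner_sub_right, hwy, hws, sub_zero]
  -- Pythagoras
  have hxsq : ‖x‖ ^ 2 = ‖x - y‖ ^ 2 + ‖y‖ ^ 2 := by
    have h := norm_add_sq_eq_norm_sq_add_norm_sq_of_inner_eq_zero (x - y) y hwy
    have h0 : (x - y) + y = x := by abel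
    rw [h0] at h
    rw [pow_two, pow_two, pow_two]; exact h
  have hxssq : ‖x - s‖ ^ 2 = ‖x - y‖ ^ 2 + ‖y - s‖ ^ 2 := by
    have := norm_add_sq_eq_norm_sq_add_norm_sq_of_inner_eq_zero (x - y) (y - s) hwys
    have h3 : (x - y) + (y - s) = x - s := by abel
    rw [h3] at this
    rw [pow_two, pow_two, pow_two]; exact this
  -- norms squared as sums
  have hysq : ‖y‖ ^ 2 = ∑' i, ‖c i‖ ^ 2 := aux_norm_sq_tsum he hy hcs
  have hssq : ‖s‖ ^ 2 = ∑' i, ‖l i‖ ^ 2 := aux_norm_sq_tsum he hs hl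
  -- scalar setup
  set a := ‖x - y‖
  set b := ‖y‖
  set cc := ‖y - s‖
  set t := ‖s‖
  have htb : t - cc ≤ b := by
    have h := norm_sub_norm_le s y
    rw [norm_sub_rev s y] at h
    linarith
  have hxs2 : a ^ 2 + cc ^ 2 ≤ r ^ 2 := by
    rw [← hxssq]
    have h0 : (0:ℝ) ≤ ‖x - s‖ := norm_nonneg _
    nlinarith [hx]
  have ha : (0:ℝ) ≤ a := norm_nonneg _
  have hb : (0:ℝ) ≤ b := norm_nonneg _
  have hcc : (0:ℝ) ≤ cc := norm_nonneg _
  have ht : (0:ℝ) ≤ t := norm_nonneg _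
  have hrt : r ^ 2 < t ^ 2 := by rw [hssq]; exact hlr
  have hct : cc < t := by nlinarith
  have key : a ^ 2 * (t ^ 2 - r ^ 2) ≤ r ^ 2 * b ^ 2 := by
    have h1 : a ^ 2 ≤ r ^ 2 - cc ^ 2 := by linarith
    have h2 : (r ^ 2 - cc ^ 2) * (t ^ 2 - r ^ 2) ≤ r ^ 2 * (t - cc) ^ 2 := by
      nlinarith [sq_nonneg (r ^ 2 - cc * t)]
    have h3 : (t - cc) ^ 2 ≤ b ^ 2 := by nlinarith
    nlinarith
  have hdiff : ‖x‖ ^ 2 - ∑' i, ‖⟪x, e i⟫_𝕜‖ ^ 2 = a ^ 2 := by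
    rw [hSeq, ← hysq, hxsq]; ring
  constructor
  · rw [hdiff]; positivity
  · rw [hdiff, hSeq, ← hysq, ← hssq]
    rw [div_mul_eq_mul_div, le_div_iff₀ (by linarith)]
    linarith [key]
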